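/- For fixed t ≥ 1 and γ > 0, the ratio p(K = t | T = t) = t_{(t)}/( (γt)^{(n)} V_n(t) ) · p_K(t) converges to 1 as n → ∞, provided p_K(t) > 0; equivalently, lim_{n→∞} V_n(t) (γt)^{(n)}/t! = p_K(t). -/

import Mathlib

open Filter

/-- Ascending factorial `x^{(n)} = x (x+1) ⋯ (x+n−1)` for a real `x`. -/
def ascFac (x : ℝ) (m : ℕ) : ℝ := ∏ i ∈ Finset.range m, (x + i)

/-- Descending factorial `k_{(t)} = k (k−1) ⋯ (k−t+1)` for a natural `k`, as a real. -/
def descFac (k : ℕ) (t : ℕ) : ℝ := ∏ i ∈ Finset.range t, ((k : ℝ) - i)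

/-- The MFM coefficient `V_n(t) = Σ_{k≥1} k_{(t)} / (γ k)^{(n)} · p_K(k)`. -/
noncomputable def Vcoef (γ : ℝ) (pK : ℕ → ℝ) (n t : ℕ) : ℝ :=
  ∑' k : ℕ, descFac k t / ascFac (γ * k) n * pK k

lemma ascFac_pos {x : ℝ} (hx : 0 < x) (n : ℕ) : 0 < ascFac x n :=
  Finset.prod_pos fun i _ => by have : (0:ℝ) ≤ i := Nat.cast_nonneg i; linarith

lemma descFac_cast {k t : ℕ} (h : t ≤ k) : descFac k t = (Nat.descFactorial k t : ℝ) := by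
  rw [Nat.descFactorial_eq_prod_range, Nat.cast_prod, descFac]
  refine Finset.prod_congr rfl fun i hi => ?_
  rw [Finset.mem_range] at hi
  rw [Nat.cast_sub (le_trans hi.le h)]

lemma descFac_self (t : ℕ) : descFac t t = (Nat.factorial t : ℝ) := by
  rw [descFac_cast le_rfl, Nat.descFactorial_self]

lemma one_add_sum_le_prod (n : ℕ) (a : ℕ → ℝ) (ha : ∀ i, 0 ≤ a i) :
    1 + ∑ i ∈ Finset.range n, a i ≤ ∏ i ∈ Finset.range n, (1 + a i) := by
  induction n with
  | zero => simp
  | succ n ih =>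
    rw [Finset.sum_range_succ, Finset.prod_range_succ]
    have hp : (0:ℝ) ≤ ∏ i ∈ Finset.range n, (1 + a i) :=
      Finset.prod_nonneg fun i _ => by linarith [ha i]
    have hs : (0:ℝ) ≤ ∑ i ∈ Finset.range n, a i := Finset.sum_nonneg fun i _ => ha i
    nlinarith [ha n, ih]

lemma ascFac_ratio_tendsto_zero {x y : ℝ} (hx : 0 < x) (hxy : x < y) :
    Tendsto (fun n => ascFac x n / ascFac y n) atTop (nhds 0) := by
  have hy : 0 < y := hx.trans hxy
  set c : ℝ := (y - x) / (x + 1) with hc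
  have hcpos : 0 < c := div_pos (by linarith) (by linarith)
  -- bound : ascFac x n / ascFac y n ≤ (1 + c * S n)⁻¹
  have key : ∀ n, ascFac x n / ascFac y n ≤
      (1 + c * ∑ i ∈ Finset.range n, (1 / (i + 1) : ℝ))⁻¹ := by
    intro n
    have h1 : 1 + c * ∑ i ∈ Finset.range n, (1 / (i + 1) : ℝ) ≤ ascFac y n / ascFac x n := by
      have : ascFac y n / ascFac x n = ∏ i ∈ Finset.range n, (1 + (y - x) / (x + i)) := by
        rw [ascFac, ascFac, ← Finset.prod_div_distrib]
        refine Finset.prod_congr rfl fun i _ => ?_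
        have hxi : (0:ℝ) < x + i := by have : (0:ℝ) ≤ i := Nat.cast_nonneg i; linarith
        field_simp
        ring
      rw [this, Finset.mul_sum]
      calc 1 + ∑ i ∈ Finset.range n, c * (1 / (i + 1) : ℝ)
          ≤ 1 + ∑ i ∈ Finset.range n, (y - x) / (x + i) := by
            apply add_le_add le_rfl
            refine Finset.sum_le_sum fun i _ => ?_
            have hi0 : (0:ℝ) ≤ i := Nat.cast_nonneg i
            rw [hc, div_mul_div_comm, mul_one]
            apply div_le_div_of_nonneg_left (by linarith) (by linarith)
            nlinarith
        _ ≤ ∏ i ∈ Finset.range n, (1 + (y - x) / (x + i)) := by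
            apply one_add_sum_le_prod
            intro i
            have hi0 : (0:ℝ) ≤ i := Nat.cast_nonneg i
            exact div_nonneg (by linarith) (by linarith)
    have hax := ascFac_pos hx n
    have hay := ascFac_pos hy n
    have hpos : (0:ℝ) < 1 + c * ∑ i ∈ Finset.range n, (1 / (i + 1) : ℝ) := by
      have : (0:ℝ) ≤ ∑ i ∈ Finset.range n, (1 / (i + 1) : ℝ) :=
        Finset.sum_nonneg fun i _ => by positivity
      nlinarith
    have h2 := inv_anti₀ hpos h1
    rwa [inv_div] at h2
  have hlim : Tendsto (fun n => (1 + c * ∑ i ∈ Finset.range n, (1 / (i + 1) : ℝ))⁻¹)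
      atTop (nhds 0) := by
    apply tendsto_inv_atTop_zero.comp
    apply tendsto_atTop_add_const_left
    exact (Real.tendsto_sum_range_one_div_nat_succ_atTop.const_mul_atTop hcpos)
  refine squeeze_zero (fun n => ?_) key hlim
  exact div_nonneg (ascFac_pos hx n).le (ascFac_pos hy n).le

lemma ascFac_prod_Ico {x : ℝ} (m n : ℕ) (h : m ≤ n) :
    ascFac x n = ascFac x m * ∏ i ∈ Finset.Ico m n, (x + i) := by
  rw [ascFac, ascFac, Finset.range_eq_Ico,
    ← Finset.prod_Ico_consecutive _ (Nat.zero_le m) h, ← Finset.range_eq_Ico]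

lemma ascFac_div_anti {x y : ℝ} (hx : 0 < x) (hxy : x ≤ y) {m n : ℕ} (h : m ≤ n) :
    ascFac x n / ascFac y n ≤ ascFac x m / ascFac y m := by
  have hy : 0 < y := lt_of_lt_of_le hx hxy
  rw [ascFac_prod_Ico m n h, ascFac_prod_Ico (x := y) m n h]
  have hP : (0:ℝ) < ∏ i ∈ Finset.Ico m n, (x + i) :=
    Finset.prod_pos fun i _ => by have : (0:ℝ) ≤ i := Nat.cast_nonneg i; linarith
  have hQ : (0:ℝ) < ∏ i ∈ Finset.Ico m n, (y + i) :=
    Finset.prod_pos fun i _ => by have : (0:ℝ) ≤ i := Nat.cast_nonneg i; linarith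
  have hPQ : (∏ i ∈ Finset.Ico m n, (x + i)) ≤ ∏ i ∈ Finset.Ico m n, (y + i) :=
    Finset.prod_le_prod (fun i _ => by have : (0:ℝ) ≤ i := Nat.cast_nonneg i; linarith)
      (fun i _ => by linarith)
  have hxm := ascFac_pos hx m
  have hym := ascFac_pos hy m
  calc ascFac x m * (∏ i ∈ Finset.Ico m n, (x + i)) / (ascFac y m * ∏ i ∈ Finset.Ico m n, (y + i))
      = (ascFac x m / ascFac y m) *
        ((∏ i ∈ Finset.Ico m n, (x + i)) / ∏ i ∈ Finset.Ico m n, (y + i)) := by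
        rw [div_mul_div_comm]
    _ ≤ (ascFac x m / ascFac y m) * 1 := by
        apply mul_le_mul_of_nonneg_left _ (by positivity)
        rw [div_le_one hQ]; exact hPQ
    _ = ascFac x m / ascFac y m := mul_one _

theorem MFM_K_given_T_tendsto_one (γ : ℝ) (hγ : 0 < γ) (t : ℕ) (ht : 1 ≤ t)
    (pK : ℕ → ℝ) (hpK_nonneg : ∀ k, 0 ≤ pK k) (hpK_zero : pK 0 = 0)
    (hpK_sum : HasSum pK 1) (hpKt : 0 < pK t) :
    Tendsto (fun n => descFac t t * pK t / (ascFac (γ * t) n * Vcoef γ pK n t))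
        atTop (nhds 1) ∧
    Tendsto (fun n => Vcoef γ pK n t * ascFac (γ * t) n / (Nat.factorial t : ℝ))
        atTop (nhds (pK t)) := by
  have htR : (0:ℝ) < t := by exact_mod_cast ht
  have hγt : 0 < γ * t := mul_pos hγ htR
  set f : ℕ → ℕ → ℝ := fun n k => descFac k t / ascFac (γ * k) n * pK k * ascFac (γ * t) n
    with hf
  set g : ℕ → ℝ := fun k => if k = t then descFac t t * pK t else 0 with hg
  set C : ℝ := max (descFac t t) (ascFac (γ * t) (t + 1) / γ ^ (t + 1)) with hC
  have hdt : descFac t t = (Nat.factorial t : ℝ) := descFac_self t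
  have hdtpos : 0 < descFac t t := by
    rw [hdt]; exact_mod_cast Nat.factorial_pos t
  have hCpos : 0 < C := lt_of_lt_of_le hdtpos (le_max_left _ _)
  -- the key limit
  have key : Tendsto (fun n => Vcoef γ pK n t * ascFac (γ * t) n) atTop
      (nhds (descFac t t * pK t)) := by
    have heq : ∀ n, Vcoef γ pK n t * ascFac (γ * t) n = ∑' k, f n k := fun n =>
      (tsum_mul_right).symm
    have hgsum : (∑' k, g k) = descFac t t * pK t := by
      rw [hg]; exact tsum_ite_eq t _
    rw [← hgsum]
    simp only [funext heq]
    apply tendsto_tsum_of_dominated_convergence (bound := fun k => C * pK k)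
      (hpK_sum.summable.mul_left C)
    · -- pointwise limits
      intro k
      rcases lt_trichotomy k t with hk | hk | hk
      · have hz : descFac k t = 0 :=
          Finset.prod_eq_zero (Finset.mem_range.mpr hk) (by simp)
        have : ∀ n, f n k = 0 := fun n => by rw [hf]; simp [hz]
        simp only [this, hg, if_neg hk.ne]
        exact tendsto_const_nhds
      · subst hk
        have : ∀ n, f n k = descFac k k * pK k := fun n => by
          rw [hf]
          have := (ascFac_pos (x := γ * k) hγt n).ne'
          field_simp
        simp only [this, hg, if_pos rfl]
        exact tendsto_const_nhds
      · have hkt : γ * t < γ * k := by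
          apply mul_lt_mul_of_pos_left _ hγ
          exact_mod_cast hk
        have : ∀ n, f n k = descFac k t * pK k * (ascFac (γ * t) n / ascFac (γ * k) n) :=
          fun n => by rw [hf]; ring
        simp only [this, hg, if_neg hk.ne']
        have := (ascFac_ratio_tendsto_zero hγt hkt).const_mul (descFac k t * pK k)
        simpa using this
    · -- uniform bound for n ≥ t + 1
      filter_upwards [eventually_ge_atTop (t + 1)] with n hn k
      rcases lt_trichotomy k t with hk | hk | hk
      · have hz : descFac k t = 0 :=
          Finset.prod_eq_zero (Finset.mem_range.mpr hk) (by simp)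
        simp only [hf, hz, zero_div, zero_mul, norm_zero]
        exact mul_nonneg hCpos.le (hpK_nonneg k)
      · subst hk
        have : f n k = descFac k k * pK k := by
          rw [hf]
          have := (ascFac_pos (x := γ * k) hγt n).ne'
          field_simp
        rw [this, Real.norm_eq_abs, abs_of_nonneg (by positivity)]
        exact mul_le_mul_of_nonneg_right (le_max_left _ _) (hpK_nonneg k)
      · -- the tail bound
        have hk1 : (1:ℝ) ≤ k := by exact_mod_cast ht.trans hk.le
        have hγk : 0 < γ * k := mul_pos hγ (by linarith)
        have hγtk : γ * t ≤ γ * k := by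
          apply mul_le_mul_of_nonneg_left _ hγ.le
          exact_mod_cast hk.le
        have hfk : f n k = descFac k t * pK k * (ascFac (γ * t) n / ascFac (γ * k) n) := by
          rw [hf]; ring
        have hdk_nonneg : 0 ≤ descFac k t := Finset.prod_nonneg fun i hi => by
          rw [Finset.mem_range] at hi
          have h1 : (i:ℝ) < t := by exact_mod_cast hi
          have h2 : (t:ℝ) < k := by exact_mod_cast hk
          linarith
        have hrat_nonneg : 0 ≤ ascFac (γ * t) n / ascFac (γ * k) n :=
          div_nonneg (ascFac_pos hγt n).le (ascFac_pos hγk n).le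
        have hfnn : 0 ≤ f n k := by
          rw [hfk]
          exact mul_nonneg (mul_nonneg hdk_nonneg (hpK_nonneg k)) hrat_nonneg
        rw [Real.norm_eq_abs, abs_of_nonneg hfnn, hfk]
        -- step 1 : ratio bound
        have step1 : ascFac (γ * t) n / ascFac (γ * k) n ≤
            ascFac (γ * t) (t + 1) / (γ * k) ^ (t + 1) := by
          calc ascFac (γ * t) n / ascFac (γ * k) n
              ≤ ascFac (γ * t) (t + 1) / ascFac (γ * k) (t + 1) :=
                ascFac_div_anti hγt hγtk hn
            _ ≤ ascFac (γ * t) (t + 1) / (γ * k) ^ (t + 1) := by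
                apply div_le_div_of_nonneg_left (ascFac_pos hγt _).le (by positivity)
                rw [ascFac]
                calc (γ * k) ^ (t + 1) = ∏ _i ∈ Finset.range (t + 1), (γ * k) := by
                      rw [Finset.prod_const, Finset.card_range]
                  _ ≤ ∏ i ∈ Finset.range (t + 1), (γ * k + i) :=
                      Finset.prod_le_prod (fun i _ => hγk.le)
                        (fun i _ => by have : (0:ℝ) ≤ i := Nat.cast_nonneg i; linarith)
        -- step 2 : descFac bound
        have step2 : descFac k t ≤ (k:ℝ) ^ t := by
          rw [descFac]
          calc ∏ i ∈ Finset.range t, ((k:ℝ) - i)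
              ≤ ∏ _i ∈ Finset.range t, (k:ℝ) := Finset.prod_le_prod
                (fun i hi => by
                  rw [Finset.mem_range] at hi
                  have h1 : (i:ℝ) < t := by exact_mod_cast hi
                  have h2 : (t:ℝ) < k := by exact_mod_cast hk
                  linarith)
                (fun i _ => by have : (0:ℝ) ≤ i := Nat.cast_nonneg i; linarith)
            _ = (k:ℝ) ^ t := by rw [Finset.prod_const, Finset.card_range]
        calc descFac k t * pK k * (ascFac (γ * t) n / ascFac (γ * k) n)
            ≤ (k:ℝ) ^ t * pK k * (ascFac (γ * t) (t + 1) / (γ * k) ^ (t + 1)) := by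
              apply mul_le_mul (mul_le_mul_of_nonneg_right step2 (hpK_nonneg k))
                step1 hrat_nonneg
                (mul_nonneg (by positivity) (hpK_nonneg k))
          _ = (ascFac (γ * t) (t + 1) / γ ^ (t + 1)) * ((k:ℝ) ^ t / (k:ℝ) ^ (t + 1)) * pK k := by
              rw [mul_pow]
              field_simp
          _ ≤ (ascFac (γ * t) (t + 1) / γ ^ (t + 1)) * 1 * pK k := by
              apply mul_le_mul_of_nonneg_right _ (hpK_nonneg k)
              apply mul_le_mul_of_nonneg_left _
                (div_nonneg (ascFac_pos hγt (t+1)).le (by positivity))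
              rw [div_le_one (by positivity), pow_succ]
              nlinarith [pow_pos (lt_of_lt_of_le one_pos hk1) t]
          _ ≤ C * pK k := by
              rw [mul_one]
              exact mul_le_mul_of_nonneg_right (le_max_right _ _) (hpK_nonneg k)
  -- conclude
  have hLpos : 0 < descFac t t * pK t := mul_pos hdtpos hpKt
  constructor
  · have h1 : Tendsto (fun n => descFac t t * pK t / (Vcoef γ pK n t * ascFac (γ * t) n))
        atTop (nhds (descFac t t * pK t / (descFac t t * pK t))) :=
      tendsto_const_nhds.div key hLpos.ne'
    rw [div_self hLpos.ne'] at h1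
    have heqfun : (fun n => descFac t t * pK t / (ascFac (γ * t) n * Vcoef γ pK n t)) =
        fun n => descFac t t * pK t / (Vcoef γ pK n t * ascFac (γ * t) n) := by
      funext n; rw [mul_comm (ascFac (γ * t) n)]
    rw [heqfun]
    exact h1
  · have hfac : (Nat.factorial t : ℝ) ≠ 0 := by
      exact_mod_cast (Nat.factorial_pos t).ne'
    have h2 := key.div_const (Nat.factorial t : ℝ)
    rw [hdt, mul_div_cancel_left₀ _ hfac] at h2
    exact h2
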